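/- Let X be a Banach space, Y an M-summand in X, and Z a closed subspace of Y. If the triplet (Y, Z, CB(Y)) has property-(P₁), then (X, Z, CB(X)) has property-(P₁). -/

import Mathlib

open Metric Set Bornology Pointwise

/-- The farthest distance `r(v,B) = sup_{b ∈ B} ‖v - b‖`. -/
noncomputable def farr {X : Type*} [NormedAddCommGroup X] (v : X) (B : Set X) : ℝ :=
  ⨆ b : B, ‖v - (b : X)‖

/-- The restricted Chebyshev radius `rad_V(B) = inf_{v ∈ V} r(v,B)`. -/
noncomputable def rad {X : Type*} [NormedAddCommGroup X] (V B : Set X) : ℝ :=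
  ⨅ v : V, farr (v : X) B

/-- The set of restricted Chebyshev centers of `B` in `V`. -/
noncomputable def cheb {X : Type*} [NormedAddCommGroup X] (V B : Set X) : Set X :=
  {v ∈ V | farr v B = rad V B}
/-- Property-(P₁) for the triplet `(amb, V, CB(amb))`: for every nonempty closed bounded
subset of the ambient set `amb`, restricted Chebyshev centers in `V` exist and
near-centers are close to centers. -/
noncomputable def propP1Rel {X : Type*} [NormedAddCommGroup X] (amb V : Set X) : Prop :=
  ∀ B : Set X, B ⊆ amb → B.Nonempty → IsClosed B → IsBounded B →
    (cheb V B).Nonempty ∧ ∀ ε > (0 : ℝ), ∃ δ > (0 : ℝ),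
      {v ∈ V | farr v B ≤ rad V B + δ} ⊆ cheb V B + closedBall 0 ε

section Helpers
variable {X : Type*} [NormedAddCommGroup X] {v : X} {B : Set X}

lemma bdd_farr (hB : IsBounded B) (v : X) :
    BddAbove (Set.range fun b : B => ‖v - (b : X)‖) := by
  obtain ⟨C, hC⟩ := isBounded_iff_forall_norm_le.mp hB
  refine ⟨‖v‖ + C, ?_⟩
  rintro _ ⟨b, rfl⟩
  calc ‖v - (b : X)‖ ≤ ‖v‖ + ‖(b : X)‖ := norm_sub_le _ _
    _ ≤ ‖v‖ + C := by linarith [hC b b.2]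

lemma le_farr (hB : IsBounded B) {b : X} (hb : b ∈ B) : ‖v - b‖ ≤ farr v B :=
  le_ciSup (bdd_farr hB v) ⟨b, hb⟩

lemma farr_le (hne : B.Nonempty) {c : ℝ} (hc : ∀ b ∈ B, ‖v - b‖ ≤ c) : farr v B ≤ c := by
  have : Nonempty B := hne.to_subtype
  exact ciSup_le fun b => hc b b.2

lemma farr_nonneg (hne : B.Nonempty) (hB : IsBounded B) : 0 ≤ farr v B := by
  obtain ⟨b, hb⟩ := hne
  exact (norm_nonneg _).trans (le_farr hB hb)

lemma farr_closure (hne : B.Nonempty) (hB : IsBounded B) :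
    farr v (closure B) = farr v B := by
  refine le_antisymm (farr_le hne.closure fun b hb => ?_)
    (farr_le hne fun b hb => le_farr hB.closure (subset_closure hb))
  have hcl : IsClosed {x : X | ‖v - x‖ ≤ farr v B} :=
    isClosed_le ((continuous_const.sub continuous_id).norm) continuous_const
  exact hcl.closure_subset_iff.mpr (fun b hb => le_farr hB hb) hb

lemma ciSup_max {ι : Type*} [Nonempty ι] {f g : ι → ℝ}
    (hf : BddAbove (Set.range f)) (hg : BddAbove (Set.range g)) :
    (⨆ i, max (f i) (g i)) = max (⨆ i, f i) (⨆ i, g i) := by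
  obtain ⟨a, ha⟩ := hf
  obtain ⟨b, hb⟩ := hg
  have hm : BddAbove (Set.range fun i => max (f i) (g i)) := by
    refine ⟨max a b, ?_⟩
    rintro _ ⟨i, rfl⟩
    exact max_le_max (ha ⟨i, rfl⟩) (hb ⟨i, rfl⟩)
  refine le_antisymm (ciSup_le fun i => max_le_max (le_ciSup ⟨a, ha⟩ i) (le_ciSup ⟨b, hb⟩ i))
    (max_le (ciSup_le fun i => (le_max_left _ _).trans (le_ciSup hm i))
      (ciSup_le fun i => (le_max_right _ _).trans (le_ciSup hm i)))

end Helpers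

theorem stmt14 {X : Type*} [NormedAddCommGroup X] [NormedSpace ℝ X] [CompleteSpace X]
    (Y Z : Subspace ℝ X) (hYc : IsClosed (Y : Set X)) (hZc : IsClosed (Z : Set X))
    (hZY : Z ≤ Y)
    (P : X →L[ℝ] X) (hproj : ∀ x, P (P x) = P x)
    (hrange : ∀ x, P x ∈ Y) (hfix : ∀ y ∈ Y, P y = y)
    (hnorm : ∀ x, ‖x‖ = max ‖P x‖ ‖x - P x‖)
    (h : propP1Rel (Y : Set X) (Z : Set X)) :
    propP1Rel (univ : Set X) (Z : Set X) := by
  intro B _ hne hcl hbd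
  have hneT : Nonempty B := hne.to_subtype
  obtain ⟨C, hC⟩ := isBounded_iff_forall_norm_le.mp hbd
  -- the projected set
  have hPBbd : IsBounded (P '' B) := by
    refine isBounded_iff_forall_norm_le.mpr ⟨‖P‖ * C, ?_⟩
    rintro _ ⟨b, hb, rfl⟩
    calc ‖P b‖ ≤ ‖P‖ * ‖b‖ := P.le_opNorm b
      _ ≤ ‖P‖ * C := by
          exact mul_le_mul_of_nonneg_left (hC b hb) (norm_nonneg _)
  set B' := closure (P '' B) with hB'def
  have hB'ne : B'.Nonempty := (hne.image P).closure
  have hB'cl : IsClosed B' := isClosed_closure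
  have hB'bd : IsBounded B' := hPBbd.closure
  have hB'Y : B' ⊆ (Y : Set X) := by
    refine hYc.closure_subset_iff.mpr ?_
    rintro _ ⟨b, hb, rfl⟩
    exact hrange b
  -- the constant s
  set s : ℝ := ⨆ b : B, ‖(b : X) - P b‖ with hsdef
  have hsbdd : BddAbove (Set.range fun b : B => ‖(b : X) - P b‖) := by
    refine ⟨C + ‖P‖ * C, ?_⟩
    rintro _ ⟨b, rfl⟩
    calc ‖(b : X) - P b‖ ≤ ‖(b : X)‖ + ‖P (b : X)‖ := norm_sub_le _ _
      _ ≤ C + ‖P‖ * C := by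
          have h1 := hC b b.2
          have h2 : ‖P (b : X)‖ ≤ ‖P‖ * ‖(b : X)‖ := P.le_opNorm _
          have h3 : ‖P‖ * ‖(b : X)‖ ≤ ‖P‖ * C := mul_le_mul_of_nonneg_left h1 (norm_nonneg _)
          linarith
  have hs0 : 0 ≤ s := by
    obtain ⟨b, hb⟩ := hne
    exact (norm_nonneg _).trans (le_ciSup hsbdd ⟨b, hb⟩)
  -- key pointwise identity
  have key : ∀ v ∈ (Y : Set X), farr v B = max (farr v B') s := by
    intro v hv
    have hbddP : BddAbove (Set.range fun b : B => ‖v - P (b : X)‖) := by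
      refine (bdd_farr hPBbd v).mono ?_
      rintro _ ⟨b, rfl⟩
      exact ⟨⟨P b, ⟨b, b.2, rfl⟩⟩, rfl⟩
    have step1 : farr v B = ⨆ b : B, max ‖v - P (b : X)‖ ‖(b : X) - P b‖ := by
      refine iSup_congr fun b => ?_
      have h1 := hnorm (v - (b : X))
      have h2 : P (v - (b : X)) = v - P (b : X) := by
        rw [map_sub, hfix v hv]
      rw [h2] at h1
      have h3 : v - (b : X) - (v - P (b : X)) = P (b : X) - (b : X) := by abel
      rw [h3, norm_sub_rev (P (b:X)) (b:X)] at h1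
      exact h1
    have step2 : farr v (P '' B) = ⨆ b : B, ‖v - P (b : X)‖ := by
      refine le_antisymm (farr_le (hne.image P) ?_) (ciSup_le fun b => le_farr hPBbd ⟨b, b.2, rfl⟩)
      rintro _ ⟨b, hb, rfl⟩
      exact le_ciSup hbddP ⟨b, hb⟩
    rw [step1, ciSup_max hbddP hsbdd, ← step2, farr_closure (hne.image P) hPBbd]
  have hZ0 : (0 : X) ∈ (Z : Set X) := Z.zero_mem
  have hZT : Nonempty (Z : Set X) := ⟨⟨0, hZ0⟩⟩
  have keyZ : ∀ v : (Z : Set X), farr (v : X) B = max (farr (v : X) B') s :=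
    fun v => key v (hZY v.2)
  -- bounded below facts for rad
  have hbddB' : BddBelow (Set.range fun v : (Z : Set X) => farr (v : X) B') := by
    exact ⟨0, by rintro _ ⟨v, rfl⟩; exact farr_nonneg hB'ne hB'bd⟩
  have hbddB : BddBelow (Set.range fun v : (Z : Set X) => farr (v : X) B) := by
    exact ⟨0, by rintro _ ⟨v, rfl⟩; exact farr_nonneg hne hbd⟩
  have hradle : ∀ v : (Z : Set X), rad (Z : Set X) B' ≤ farr (v : X) B' :=
    fun v => ciInf_le hbddB' v
  set r : ℝ := rad (Z : Set X) B' with hrdef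
  -- radius identity
  have hrad : rad (Z : Set X) B = max r s := by
    refine le_antisymm (le_of_forall_pos_le_add fun ε hε => ?_)
      (le_ciInf fun v => by rw [keyZ v]; exact max_le_max (hradle v) le_rfl)
    have : r < r + ε := by linarith
    obtain ⟨v, hv⟩ := exists_lt_of_ciInf_lt this
    calc rad (Z : Set X) B ≤ farr (v : X) B := ciInf_le hbddB v
      _ = max (farr (v : X) B') s := keyZ v
      _ ≤ max r s + ε := by
          refine max_le (le_trans hv.le ?_) ?_
          · exact add_le_add_left (le_max_left _ _) ε
          · linarith [le_max_right r s]
  -- centers of B' are centers of B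
  have hchebsub : cheb (Z : Set X) B' ⊆ cheb (Z : Set X) B := by
    rintro v ⟨hvZ, hvc⟩
    refine ⟨hvZ, ?_⟩
    rw [key v (hZY hvZ), hvc, hrad]
  obtain ⟨hc_ne, hc_eps⟩ := h B' hB'Y hB'ne hB'cl hB'bd
  refine ⟨hc_ne.mono hchebsub, fun ε hε => ?_⟩
  rcases le_or_gt s r with hcase | hcase
  · -- s ≤ r : reduce to property (P₁) for B'
    obtain ⟨δ, hδ, hδ'⟩ := hc_eps ε hε
    refine ⟨δ, hδ, ?_⟩
    rintro v ⟨hvZ, hvle⟩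
    have hv' : farr v B' ≤ r + δ := by
      have h1 : farr v B = max (farr v B') s := key v (hZY hvZ)
      have h2 : rad (Z : Set X) B = r := by rw [hrad, max_eq_left hcase]
      rw [h2] at hvle
      calc farr v B' ≤ max (farr v B') s := le_max_left _ _
        _ = farr v B := h1.symm
        _ ≤ r + δ := hvle
    exact add_subset_add_right hchebsub (hδ' ⟨hvZ, hv'⟩)
  · -- r < s
    have hrs : 0 < s - r := by linarith
    have hr0 : 0 ≤ r := le_ciInf fun v => farr_nonneg hB'ne hB'bd
    set δ : ℝ := min 1 (ε * (s - r) / (s + r + 2)) with hδdef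
    have hsr2 : 0 < s + r + 2 := by linarith
    have hδpos : 0 < δ := lt_min one_pos (by positivity)
    have hδ1 : δ ≤ 1 := min_le_left _ _
    have hδ2 : δ * (s + r + 2) ≤ ε * (s - r) := by
      have := min_le_right 1 (ε * (s - r) / (s + r + 2))
      calc δ * (s + r + 2) ≤ (ε * (s - r) / (s + r + 2)) * (s + r + 2) := by
            exact mul_le_mul_of_nonneg_right this hsr2.le
        _ = ε * (s - r) := by field_simp
    refine ⟨δ, hδpos, ?_⟩
    rintro v ⟨hvZ, hvle⟩
    obtain ⟨v₀, hv₀Z, hv₀c⟩ := hc_ne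
    have hradB : rad (Z : Set X) B = s := by rw [hrad, max_eq_right hcase.le]
    have hfv : farr v B' ≤ s + δ := by
      rw [hradB] at hvle
      calc farr v B' ≤ max (farr v B') s := le_max_left _ _
        _ = farr v B := (key v (hZY hvZ)).symm
        _ ≤ s + δ := hvle
    have hfv0 : farr v₀ B' = r := hv₀c
    set t : ℝ := δ / (s + δ - r) with htdef
    have hden : 0 < s + δ - r := by linarith
    have ht0 : 0 ≤ t := by positivity
    have ht1 : t ≤ 1 := by
      rw [div_le_one hden]; linarith
    have htden : t * (s + δ - r) = δ := div_mul_cancel₀ δ hden.ne'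
    set w : X := v + t • (v₀ - v) with hwdef
    have hwZ : w ∈ (Z : Set X) := Z.add_mem hvZ (Z.smul_mem t (Z.sub_mem hv₀Z hvZ))
    have hfw : farr w B' ≤ s := by
      refine farr_le hB'ne fun b hb => ?_
      have hdecomp : w - b = (1 - t) • (v - b) + t • (v₀ - b) := by
        rw [hwdef]; module
      calc ‖w - b‖ = ‖(1 - t) • (v - b) + t • (v₀ - b)‖ := by rw [hdecomp]
        _ ≤ (1 - t) * ‖v - b‖ + t * ‖v₀ - b‖ := by
            refine (norm_add_le _ _).trans ?_
            rw [norm_smul, norm_smul, Real.norm_eq_abs, Real.norm_eq_abs,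
              abs_of_nonneg (by linarith : (0:ℝ) ≤ 1 - t), abs_of_nonneg ht0]
        _ ≤ (1 - t) * (s + δ) + t * r := by
            refine add_le_add ?_ ?_
            · exact mul_le_mul_of_nonneg_left ((le_farr hB'bd hb).trans hfv) (by linarith)
            · exact mul_le_mul_of_nonneg_left ((le_farr hB'bd hb).trans hfv0.le) ht0
        _ = (s + δ) - t * (s + δ - r) := by ring
        _ = s := by rw [htden]; ring
    have hwcheb : w ∈ cheb (Z : Set X) B := by
      refine ⟨hwZ, ?_⟩
      rw [key w (hZY hwZ), hradB, max_eq_right hfw]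
    have hvv0 : ‖v - v₀‖ ≤ (s + δ) + r := by
      obtain ⟨b, hb⟩ := hB'ne
      calc ‖v - v₀‖ ≤ ‖v - b‖ + ‖b - v₀‖ := norm_sub_le_norm_sub_add_norm_sub v b v₀
        _ ≤ (s + δ) + r := by
            have h1 : ‖v - b‖ ≤ s + δ := (le_farr hB'bd hb).trans hfv
            have h2 : ‖b - v₀‖ ≤ r := by
              rw [norm_sub_rev]; exact (le_farr hB'bd hb).trans hfv0.le
            linarith
    have hdist : ‖v - w‖ ≤ ε := by
      have : v - w = t • (v - v₀) := by
        rw [hwdef]; module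
      rw [this, norm_smul, Real.norm_eq_abs, abs_of_nonneg ht0]
      have h1 : t * ‖v - v₀‖ ≤ t * ((s + δ) + r) := mul_le_mul_of_nonneg_left hvv0 ht0
      refine h1.trans ?_
      rw [htdef, div_mul_eq_mul_div, div_le_iff₀ hden]
      nlinarith [norm_nonneg (v - v₀), hε.le]
    refine ⟨w, hwcheb, v - w, ?_, by module⟩
    simpa [mem_closedBall, dist_eq_norm] using hdist
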